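/- arXiv:2009.11596 — 3 statements merged into one kernel-verified Lean document; each statement's English description precedes it below -/
import Mathlib

section
/- Let $\Phi:\{y\in\mathbb{C}: 1-\varepsilon<|y|<1+\varepsilon\}\to\mathbb{C}$ be analytic (given by an absolutely convergent Laurent series with non-negative coefficients $\Phi(y)=\sum_{\ell\in\mathbb{Z}} p_\ell y^\ell$, $\sum p_\ell = 1$), with $\Phi(1)=1$, $\Phi'(1)>0$, and $|\Phi(y)|<1$ for all $|y|=1$, $y\neq 1$ (aperiodicity). Then the function $y\mapsto 1/(1-\Phi(y))$ is meromorphic on a possibly smaller annulus $\{1-\varepsilon'<|y|<1+\varepsilon'\}$ with a unique pole there, which is simple, located at $y=1$, and has residue $-1/\Phi'(1)$. -/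
open Filter Metric Set Topology

private lemma bdd_mul_pow {x y : ℝ} (hx : 0 ≤ x) (hxy : x < y) :
    ∃ C : ℝ, 0 ≤ C ∧ ∀ n : ℕ, (n : ℝ) * x ^ n ≤ C * y ^ n := by
  have hy : 0 < y := lt_of_le_of_lt hx hxy
  have hq : ‖x / y‖ < 1 := by
    rw [Real.norm_eq_abs, abs_of_nonneg (div_nonneg hx hy.le)]
    exact (div_lt_one hy).2 hxy
  have hs : Summable (fun n : ℕ => (n : ℝ) ^ 1 * (x / y) ^ n) :=
    summable_pow_mul_geometric_of_norm_lt_one 1 hq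
  simp only [pow_one] at hs
  have hnn : ∀ j : ℕ, 0 ≤ (j : ℝ) * (x / y) ^ j := fun j =>
    mul_nonneg (Nat.cast_nonneg j) (pow_nonneg (div_nonneg hx hy.le) j)
  refine ⟨∑' n : ℕ, (n : ℝ) * (x / y) ^ n, tsum_nonneg hnn, fun n => ?_⟩
  have h1 : (n : ℝ) * (x / y) ^ n ≤ ∑' m : ℕ, (m : ℝ) * (x / y) ^ m :=
    Summable.le_tsum hs n fun j _ => hnn j
  calc (n : ℝ) * x ^ n = ((n : ℝ) * (x / y) ^ n) * y ^ n := by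
        rw [div_pow]; field_simp
    _ ≤ _ := mul_le_mul_of_nonneg_right h1 (pow_nonneg hy.le n)

set_option maxHeartbeats 1600000 in
/-- Meromorphic structure of `1/(1 - Φ)` for an aperiodic probability-generating Laurent series
`Φ` with `Φ(1) = 1` and `Φ'(1) = d > 0`: on a small annulus around the unit circle,
`1/(1 - Φ(y))` has a unique pole, simple, at `y = 1`, with residue `-1/d`. -/
theorem stmt13 (ε : ℝ) (hε : 0 < ε) (hε1 : ε < 1) (p : ℤ → ℝ) (Φ : ℂ → ℂ)
    (hp0 : ∀ ℓ, 0 ≤ p ℓ) (hp1 : HasSum p 1)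
    (hΦ : ∀ y : ℂ, 1 - ε < ‖y‖ → ‖y‖ < 1 + ε →
      HasSum (fun ℓ : ℤ => (p ℓ : ℂ) * y ^ ℓ) (Φ y))
    (d : ℝ) (hd : HasSum (fun ℓ : ℤ => p ℓ * (ℓ : ℝ)) d) (hd0 : 0 < d)
    (haper : ∀ y : ℂ, ‖y‖ = 1 → y ≠ 1 → ‖Φ y‖ < 1) :
    ∃ ε' : ℝ, 0 < ε' ∧ ε' ≤ ε ∧ ∃ h : ℂ → ℂ,
      AnalyticOnNhd ℂ h {y : ℂ | 1 - ε' < ‖y‖ ∧ ‖y‖ < 1 + ε'} ∧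
      ∀ y : ℂ, 1 - ε' < ‖y‖ → ‖y‖ < 1 + ε' → y ≠ 1 →
        Φ y ≠ 1 ∧ 1 / (1 - Φ y) = -(1 / (d : ℂ)) / (y - 1) + h y := by
  -- radii
  set b2 : ℝ := 1 - ε/2 with hb2def
  set a2 : ℝ := 1 + ε/2 with ha2def
  set b3 : ℝ := 1 - 3*ε/4 with hb3def
  set a3 : ℝ := 1 + 3*ε/4 with ha3def
  have hb3 : 0 < b3 := by simp only [hb3def]; linarith
  have hb2 : (0:ℝ) < b2 := by simp only [hb2def]; linarith
  have hb2half : (1:ℝ)/2 ≤ b2 := by simp only [hb2def]; linarith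
  have ha2 : (1:ℝ) < a2 := by simp only [ha2def]; linarith
  have ha20 : (0:ℝ) < a2 := lt_trans zero_lt_one ha2
  have ha30 : (0:ℝ) < a3 := by simp only [ha3def]; linarith
  have hb32 : b3 < b2 := by simp only [hb2def, hb3def]; linarith
  have ha23 : a2 < a3 := by simp only [ha2def, ha3def]; linarith
  have hb21 : b2 < 1 := by simp only [hb2def]; linarith
  -- summability at any admissible radius
  have hsum : ∀ r : ℝ, 0 < r → 1 - ε < r → r < 1 + ε →
      Summable (fun ℓ : ℤ => p ℓ * r ^ ℓ) := by
    intro r hr0 hr1 hr2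
    have hnr : ‖(r : ℂ)‖ = r := by simp [Complex.norm_real, abs_of_pos hr0]
    have h := (hΦ (r : ℂ) (by rw [hnr]; exact hr1) (by rw [hnr]; exact hr2)).summable
    rw [← Complex.summable_ofReal]
    refine h.congr fun ℓ => ?_
    push_cast; ring
  have hsa3 : Summable (fun ℓ : ℤ => p ℓ * a3 ^ ℓ) :=
    hsum a3 ha30 (by simp only [ha3def]; linarith) (by simp only [ha3def]; linarith)
  have hsb3 : Summable (fun ℓ : ℤ => p ℓ * b3 ^ ℓ) :=
    hsum b3 hb3 (by simp only [hb3def]; linarith) (by simp only [hb3def]; linarith)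
  -- master pointwise bound
  obtain ⟨c1, hc1, hC1⟩ := bdd_mul_pow ha20.le ha23
  obtain ⟨c2, hc2, hC2⟩ := bdd_mul_pow hb2.le (lt_trans hb21 (lt_trans ha2 ha23))
  obtain ⟨c3, hc3, hC3⟩ := bdd_mul_pow (inv_nonneg.mpr ha20.le)
    (by
      have h1 : a2⁻¹ < 1 := inv_lt_one_of_one_lt₀ ha2
      have hb31 : b3 < 1 := by simp only [hb3def]; linarith
      have h2 : (1:ℝ) < b3⁻¹ := (one_lt_inv₀ hb3).mpr hb31
      exact lt_trans h1 h2)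
  obtain ⟨c4, hc4, hC4⟩ := bdd_mul_pow (inv_nonneg.mpr hb2.le)
    ((inv_lt_inv₀ hb2 hb3).mpr hb32)
  set K0 : ℝ := 2 * (c1 + c2 + c3 + c4) with hK0def
  have hK00 : 0 ≤ K0 := by simp only [hK0def]; linarith
  have master : ∀ ℓ : ℤ, |(ℓ:ℝ)| * (2 * (a2 ^ ℓ + b2 ^ ℓ)) ≤ K0 * (a3 ^ ℓ + b3 ^ ℓ) := by
    intro ℓ
    simp only [hK0def]
    obtain ⟨n, rfl | rfl⟩ := Int.eq_nat_or_neg ℓ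
    · rw [zpow_natCast, zpow_natCast, zpow_natCast, zpow_natCast]
      have habs : |(((n:ℤ)):ℝ)| = (n:ℝ) := by
        push_cast; exact abs_of_nonneg (Nat.cast_nonneg n)
      rw [habs]
      have h1 := hC1 n
      have h2 := hC2 n
      have ha3n : (0:ℝ) ≤ a3 ^ n := pow_nonneg ha30.le n
      have hb3n : (0:ℝ) ≤ b3 ^ n := pow_nonneg hb3.le n
      nlinarith [mul_nonneg hc3 ha3n, mul_nonneg hc4 ha3n,
        mul_nonneg (add_nonneg (add_nonneg (add_nonneg hc1 hc2) hc3) hc4) hb3n]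
    · rw [zpow_neg, zpow_neg, zpow_neg, zpow_neg, zpow_natCast, zpow_natCast,
        zpow_natCast, zpow_natCast, ← inv_pow, ← inv_pow, ← inv_pow, ← inv_pow]
      have habs : |(((-(n : ℤ)) : ℤ) : ℝ)| = (n : ℝ) := by
        push_cast; rw [abs_neg]; exact abs_of_nonneg (Nat.cast_nonneg n)
      rw [habs]
      have h3 := hC3 n
      have h4 := hC4 n
      have ha3n : (0:ℝ) ≤ (a3⁻¹) ^ n := pow_nonneg (inv_nonneg.mpr ha30.le) n
      have hb3n : (0:ℝ) ≤ (b3⁻¹) ^ n := pow_nonneg (inv_nonneg.mpr hb3.le) n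
      nlinarith [mul_nonneg hc1 hb3n, mul_nonneg hc2 hb3n,
        mul_nonneg (add_nonneg (add_nonneg (add_nonneg hc1 hc2) hc3) hc4) ha3n]
  -- the dominating series
  set u : ℤ → ℝ := fun ℓ => p ℓ * (|(ℓ:ℝ)| * (2 * (a2 ^ ℓ + b2 ^ ℓ))) with hudef
  have hu0 : ∀ ℓ, 0 ≤ u ℓ := fun ℓ =>
    mul_nonneg (hp0 ℓ) (mul_nonneg (abs_nonneg _)
      (mul_nonneg two_pos.le (add_nonneg (zpow_nonneg ha20.le ℓ) (zpow_nonneg hb2.le ℓ))))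
  have hbig : Summable (fun ℓ : ℤ => K0 * (p ℓ * a3 ^ ℓ + p ℓ * b3 ^ ℓ)) :=
    (hsa3.add hsb3).mul_left K0
  have husum : Summable u := by
    refine Summable.of_nonneg_of_le hu0 (fun ℓ => ?_) hbig
    calc u ℓ ≤ p ℓ * (K0 * (a3 ^ ℓ + b3 ^ ℓ)) :=
          mul_le_mul_of_nonneg_left (master ℓ) (hp0 ℓ)
      _ = K0 * (p ℓ * a3 ^ ℓ + p ℓ * b3 ^ ℓ) := by ring
  -- the annulus S
  set S : Set ℂ := {y : ℂ | b2 < ‖y‖ ∧ ‖y‖ < a2} with hSdef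
  have hSopen : IsOpen S := by
    rw [hSdef, setOf_and]
    exact (isOpen_lt continuous_const continuous_norm).inter
      (isOpen_lt continuous_norm continuous_const)
  have hSsub : ∀ y ∈ S, 1 - ε < ‖y‖ ∧ ‖y‖ < 1 + ε := by
    intro y hy
    constructor
    · refine lt_trans ?_ hy.1; simp only [hb2def]; linarith
    · refine lt_trans hy.2 ?_; simp only [ha2def]; linarith
  -- M-test bound for the differentiated series
  have hfu : ∀ (ℓ : ℤ), ∀ y ∈ S, ‖(p ℓ : ℂ) * ((ℓ:ℂ) * y ^ (ℓ - 1))‖ ≤ u ℓ := by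
    intro ℓ y hy
    have hy0 : (0:ℝ) < ‖y‖ := lt_trans hb2 hy.1
    have hyne : y ≠ 0 := by
      intro h; rw [h] at hy0; simp at hy0
    have hnorm : ‖(p ℓ : ℂ) * ((ℓ:ℂ) * y ^ (ℓ - 1))‖
        = p ℓ * (|(ℓ:ℝ)| * ‖y‖ ^ (ℓ - 1)) := by
      rw [norm_mul, norm_mul, norm_zpow]
      have e1 : ‖(p ℓ : ℂ)‖ = p ℓ := by
        simp [Complex.norm_real, Real.norm_eq_abs, abs_of_nonneg (hp0 ℓ)]
      have e2 : ‖((ℓ:ℤ):ℂ)‖ = |(ℓ:ℝ)| := by simp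
      rw [e1, e2]
    rw [hnorm, hudef]
    refine mul_le_mul_of_nonneg_left (mul_le_mul_of_nonneg_left ?_ (abs_nonneg _)) (hp0 ℓ)
    -- ‖y‖ ^ (ℓ - 1) ≤ 2 * (a2 ^ ℓ + b2 ^ ℓ)
    have hyinv : ‖y‖⁻¹ ≤ 2 := by
      rw [inv_le_comm₀ hy0 two_pos]
      calc (2:ℝ)⁻¹ ≤ b2 := by rw [hb2def]; norm_num; linarith
        _ ≤ ‖y‖ := hy.1.le
    have hyl : ‖y‖ ^ ℓ ≤ a2 ^ ℓ + b2 ^ ℓ := by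
      obtain ⟨n, rfl | rfl⟩ := Int.eq_nat_or_neg ℓ
      · rw [zpow_natCast, zpow_natCast, zpow_natCast]
        have h1 : ‖y‖ ^ n ≤ a2 ^ n := pow_le_pow_left₀ hy0.le hy.2.le n
        have h2 : (0:ℝ) ≤ b2 ^ n := pow_nonneg hb2.le n
        linarith
      · rw [zpow_neg, zpow_neg, zpow_neg, zpow_natCast, zpow_natCast, zpow_natCast]
        have h1 : (‖y‖ ^ n)⁻¹ ≤ (b2 ^ n)⁻¹ :=
          inv_anti₀ (pow_pos hb2 n) (pow_le_pow_left₀ hb2.le hy.1.le n)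
        have h2 : (0:ℝ) ≤ (a2 ^ n)⁻¹ := inv_nonneg.mpr (pow_nonneg ha20.le n)
        linarith
    calc ‖y‖ ^ (ℓ - 1) = ‖y‖ ^ ℓ * ‖y‖⁻¹ := zpow_sub_one₀ (ne_of_gt hy0) ℓ
      _ ≤ (a2 ^ ℓ + b2 ^ ℓ) * 2 :=
          mul_le_mul hyl hyinv (inv_nonneg.mpr hy0.le)
            (add_nonneg (zpow_nonneg ha20.le ℓ) (zpow_nonneg hb2.le ℓ))
      _ = 2 * (a2 ^ ℓ + b2 ^ ℓ) := by ring
  -- termwise differentiation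
  set Φ' : ℂ → ℂ := fun x => ∑' ℓ : ℤ, (p ℓ : ℂ) * ((ℓ:ℂ) * x ^ (ℓ - 1)) with hΦ'def
  have hderiv : ∀ y ∈ S, HasDerivAt Φ (Φ' y) y := by
    intro y hy
    refine hasDerivAt_of_tendstoLocallyUniformlyOn (l := (atTop : Filter (Finset ℤ))) hSopen
      (f := fun (t : Finset ℤ) (x : ℂ) => ∑ ℓ ∈ t, (p ℓ : ℂ) * x ^ ℓ)
      (f' := fun (t : Finset ℤ) (x : ℂ) => ∑ ℓ ∈ t, (p ℓ : ℂ) * ((ℓ:ℂ) * x ^ (ℓ - 1)))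
      ?_ ?_ ?_ hy
    · exact (tendstoUniformlyOn_tsum husum fun ℓ x hx => hfu ℓ x hx).tendstoLocallyUniformlyOn
    · refine Eventually.of_forall fun t => fun x hx => ?_
      have hxne : x ≠ 0 := by
        intro h
        rw [h] at hx
        have := hx.1
        simp at this
        linarith
      exact HasDerivAt.fun_sum fun ℓ _ => (hasDerivAt_zpow ℓ x (Or.inl hxne)).const_mul _
    · intro x hx
      exact hΦ x (hSsub x hx).1 (hSsub x hx).2
  have h1S : (1:ℂ) ∈ S := by
    constructor <;> simp only [norm_one] <;> [exact hb21; exact ha2]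
  -- Φ is differentiable / analytic on S
  have hΦdiff : DifferentiableOn ℂ Φ S := fun y hy =>
    ((hderiv y hy).differentiableAt).differentiableWithinAt
  have hΦanalytic : AnalyticOnNhd ℂ Φ S := hΦdiff.analyticOnNhd hSopen
  -- Φ 1 = 1
  have hΦ1 : Φ 1 = 1 := by
    have h1 := hΦ 1 (by simp only [norm_one]; linarith) (by simp only [norm_one]; linarith)
    have h2 : HasSum (fun ℓ : ℤ => (p ℓ : ℂ)) 1 := by
      have := Complex.hasSum_ofReal.mpr hp1
      simpa using this
    simp only [one_zpow, mul_one] at h1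
    exact h1.unique h2
  -- Φ' 1 = d
  have hΦd1 : HasDerivAt Φ (d : ℂ) 1 := by
    have h := hderiv 1 h1S
    have h3 : HasSum (fun ℓ : ℤ => ((p ℓ * (ℓ:ℝ) : ℝ) : ℂ)) ((d:ℝ):ℂ) :=
      Complex.hasSum_ofReal.mpr hd
    have he : (fun ℓ : ℤ => ((p ℓ * (ℓ:ℝ) : ℝ) : ℂ))
        = fun ℓ : ℤ => (p ℓ:ℂ) * ((ℓ:ℂ) * (1:ℂ) ^ (ℓ - 1)) := by
      funext ℓ
      rw [one_zpow, mul_one]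
      push_cast
      ring
    rw [he] at h3
    have h4 : Φ' 1 = (d:ℂ) := by rw [hΦ'def]; exact h3.tsum_eq
    rwa [h4] at h
  -- d is nonzero in ℂ
  have hd0' : (d:ℂ) ≠ 0 := by
    simp only [ne_eq, Complex.ofReal_eq_zero]
    exact ne_of_gt hd0
  -- 1 - Φ has an isolated zero at 1
  have hGanalytic : AnalyticAt ℂ (fun y => 1 - Φ y) 1 :=
    analyticAt_const.sub (hΦanalytic 1 h1S)
  have hGderiv : HasDerivAt (fun y => 1 - Φ y) (-(d:ℂ)) 1 := by
    simpa using (hasDerivAt_const (1:ℂ) (1:ℂ)).fun_sub hΦd1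
  have hGne : ∀ᶠ z in 𝓝[≠] (1:ℂ), 1 - Φ z ≠ 0 := by
    rcases hGanalytic.eventually_eq_zero_or_eventually_ne_zero with hcase | hcase
    · exfalso
      have h0 : HasDerivAt (fun _ : ℂ => (0:ℂ)) (-(d:ℂ)) 1 :=
        hGderiv.congr_of_eventuallyEq (hcase.mono fun z hz => hz.symm)
      have huniq := h0.unique (hasDerivAt_const 1 0)
      rw [neg_eq_zero] at huniq
      exact hd0' huniq
    · exact hcase
  rw [eventually_nhdsWithin_iff, Metric.eventually_nhds_iff] at hGne
  obtain ⟨r, hr0, hrball⟩ := hGne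
  set r' : ℝ := min r 1 with hr'def
  have hr'0 : 0 < r' := lt_min hr0 zero_lt_one
  have hr'1 : r' ≤ 1 := min_le_right _ _
  have hr'r : r' ≤ r := min_le_left _ _
  -- compact region away from 1
  set K : Set ℂ := {y : ℂ | (1 - ε/4 ≤ ‖y‖ ∧ ‖y‖ ≤ 1 + ε/4) ∧ r' ≤ dist y 1} with hKdef
  have hKS : K ⊆ S := by
    intro y hy
    constructor
    · simp only [hb2def]; linarith [hy.1.1]
    · simp only [ha2def]; linarith [hy.1.2]
  have hKcompact : IsCompact K := by
    apply Metric.isCompact_of_isClosed_isBounded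
    · rw [hKdef, setOf_and, setOf_and]
      exact ((isClosed_le continuous_const continuous_norm).inter
        (isClosed_le continuous_norm continuous_const)).inter
        (isClosed_le continuous_const (continuous_id.dist continuous_const))
    · apply (Metric.isBounded_closedBall (x := (0:ℂ)) (r := 1 + ε/4)).subset
      intro y hy
      exact mem_closedBall_zero_iff.mpr hy.1.2
  have hdistneg1 : dist (-1 : ℂ) 1 = 2 := by
    rw [Complex.dist_eq]
    norm_num
  have hKne : K.Nonempty := by
    refine ⟨-1, ⟨⟨?_, ?_⟩, ?_⟩⟩
    · rw [norm_neg, norm_one]; linarith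
    · rw [norm_neg, norm_one]; linarith
    · rw [hdistneg1]
      linarith
  set F : ℂ → ℝ := fun y => ‖Φ y - 1‖ + |‖y‖ - 1| with hFdef
  have hF : ∀ y, F y = ‖Φ y - 1‖ + |‖y‖ - 1| := fun y => rfl
  have hFcont : ContinuousOn F K := by
    apply ContinuousOn.add
    · exact ((hΦdiff.continuousOn.mono hKS).sub continuousOn_const).norm
    · exact ((continuous_norm.sub continuous_const).abs).continuousOn
  obtain ⟨y₀, hy₀K, hy₀min'⟩ := hKcompact.exists_isMinOn hKne hFcont
  have hy₀min : ∀ y ∈ K, F y₀ ≤ F y := fun y hy => hy₀min' hy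
  clear_value F
  set δ : ℝ := F y₀ with hδdef
  clear_value δ
  have hδ0 : 0 < δ := by
    have h1 : 0 ≤ ‖Φ y₀ - 1‖ := norm_nonneg _
    have h2 : 0 ≤ |‖y₀‖ - 1| := abs_nonneg _
    rcases lt_or_eq_of_le (add_nonneg h1 h2) with hlt | heq
    · rw [hδdef, hF]; exact hlt
    · exfalso
      have hδ' : ‖Φ y₀ - 1‖ + |‖y₀‖ - 1| = 0 := heq.symm
      have hΦy : Φ y₀ = 1 := by
        have h3 : ‖Φ y₀ - 1‖ = 0 := by linarith
        rwa [norm_eq_zero, sub_eq_zero] at h3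
      have hny : ‖y₀‖ = 1 := by
        have h3 : |‖y₀‖ - 1| = 0 := by linarith
        have h4 := abs_eq_zero.mp h3
        linarith
      have hy₀ne : y₀ ≠ 1 := by
        intro hcon
        have h5 := hy₀K.2
        rw [hcon, dist_self] at h5
        linarith
      have h6 := haper y₀ hny hy₀ne
      rw [hΦy, norm_one] at h6
      exact lt_irrefl 1 h6
  -- the choice of ε'
  set ε' : ℝ := min (ε/4) (min (δ/2) r') with hε'def
  have hε'0 : 0 < ε' := lt_min (by linarith) (lt_min (by linarith) hr'0)
  have hε'ε : ε' ≤ ε := le_trans (min_le_left _ _) (by linarith)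
  have hε'4 : ε' ≤ ε/4 := min_le_left _ _
  have hε'δ : ε' ≤ δ/2 := le_trans (min_le_right _ _) (min_le_left _ _)
  have hε'r : ε' ≤ r' := le_trans (min_le_right _ _) (min_le_right _ _)
  clear_value ε'
  -- on the small annulus, Φ y = 1 only at y = 1
  have hne1 : ∀ y : ℂ, 1 - ε' < ‖y‖ → ‖y‖ < 1 + ε' → y ≠ 1 → Φ y ≠ 1 := by
    intro y hy1 hy2 hyne
    rcases lt_or_ge (dist y 1) r' with hcase | hcase
    · have h7 := hrball (lt_of_lt_of_le hcase hr'r)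
        (Set.mem_compl_singleton_iff.mpr hyne)
      intro hcon
      rw [hcon, sub_self] at h7
      exact h7 rfl
    · have hyK : y ∈ K := ⟨⟨by linarith, by linarith⟩, hcase⟩
      have hFy : δ ≤ F y := hy₀min y hyK
      have habs : |‖y‖ - 1| < ε' := abs_sub_lt_iff.mpr ⟨by linarith, by linarith⟩
      intro hcon
      rw [hF y, hcon, sub_self, norm_zero, zero_add] at hFy
      linarith [lt_of_lt_of_le habs hε'δ]
  -- the small annulus
  set S' : Set ℂ := {y : ℂ | 1 - ε' < ‖y‖ ∧ ‖y‖ < 1 + ε'} with hS'def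
  have hS'S : S' ⊆ S := by
    intro y hy
    have h8 := hy.1
    have h9 := hy.2
    constructor
    · simp only [hb2def]; linarith
    · simp only [ha2def]; linarith
  have hS'open : IsOpen S' := by
    rw [hS'def, setOf_and]
    exact (isOpen_lt continuous_const continuous_norm).inter
      (isOpen_lt continuous_norm continuous_const)
  have h1S' : (1:ℂ) ∈ S' := by
    constructor <;> rw [norm_one] <;> linarith
  have hS'nhds : S' ∈ 𝓝 (1:ℂ) := hS'open.mem_nhds h1S'
  -- the dslope of 1 - Φ
  have hGdiff : DifferentiableOn ℂ (fun y => 1 - Φ y) S' :=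
    (differentiableOn_const _).sub (hΦdiff.mono hS'S)
  have hgdiff : DifferentiableOn ℂ (dslope (fun y => 1 - Φ y) 1) S' :=
    (Complex.differentiableOn_dslope hS'nhds).mpr hGdiff
  have hg1 : dslope (fun y => 1 - Φ y) 1 1 = -(d:ℂ) := by
    rw [dslope_same]
    exact hGderiv.deriv
  have hgval : ∀ y : ℂ, y ≠ 1 → dslope (fun z => 1 - Φ z) 1 y = (1 - Φ y) / (y - 1) := by
    intro y hyne
    rw [dslope_of_ne _ hyne, slope_def_field, hΦ1]
    simp
  have hgne : ∀ y ∈ S', dslope (fun z => 1 - Φ z) 1 y ≠ 0 := by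
    intro y hy
    by_cases hyne : y = 1
    · rw [hyne, hg1]
      exact neg_ne_zero.mpr hd0'
    · rw [hgval y hyne]
      exact div_ne_zero (sub_ne_zero.mpr fun hc => hne1 y hy.1 hy.2 hyne hc.symm)
        (sub_ne_zero.mpr hyne)
  -- q = 1/g and h = dslope q 1
  have hqdiff : DifferentiableOn ℂ (fun y => (dslope (fun z => 1 - Φ z) 1 y)⁻¹) S' :=
    hgdiff.inv hgne
  have hhdiff : DifferentiableOn ℂ
      (dslope (fun y => (dslope (fun z => 1 - Φ z) 1 y)⁻¹) 1) S' :=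
    (Complex.differentiableOn_dslope hS'nhds).mpr hqdiff
  refine ⟨ε', hε'0, hε'ε, dslope (fun y => (dslope (fun z => 1 - Φ z) 1 y)⁻¹) 1,
    hhdiff.analyticOnNhd hS'open, ?_⟩
  intro y hy1 hy2 hyne
  have hΦyne : Φ y ≠ 1 := hne1 y hy1 hy2 hyne
  refine ⟨hΦyne, ?_⟩
  have hy1' : y - 1 ≠ 0 := sub_ne_zero.mpr hyne
  have h1Φ : 1 - Φ y ≠ 0 := sub_ne_zero.mpr (Ne.symm hΦyne)
  rw [dslope_of_ne _ hyne, slope_def_field]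
  simp only [hgval y hyne, hg1]
  rw [inv_div, inv_neg]
  field_simp
  ring
end

section
/- Let $\mu$ be a probability measure on $\mathbb{Z}^2$ with all exponential moments finite in a neighborhood of $0$, negative drift in both coordinates, and irreducible support. Define $\mathcal{Q}=\{(u,v)\in\mathbb{R}^2 : \sum_{i,j}\mu(i,j)e^{iu+jv}=1\}$ and let $u_0>0$, $v_0>0$ be determined by $(u_0,0)\in\mathcal{Q}$ and $(0,v_0)\in\mathcal{Q}$. Assume the Gauss map $(u,v)\mapsto \mathrm{grad}\,Q(e^u,e^v)/\|\mathrm{grad}\,Q(e^u,e^v)\|$ is a diffeomorphism from $\mathcal{Q}$ to the unit circle (Hennequin). Then for every $t>0$ and every $(u,v)\in\mathcal{Q}\cap(0,\infty)^2$, one has $u + t v > \min\{u_0,\, t v_0\}$. -/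
private lemma gmix (p : ℤ × ℤ) (w1 w2 : ℝ × ℝ) (a b : ℝ) :
    (p.1 : ℝ) * (a • w1 + b • w2).1 + (p.2 : ℝ) * (a • w1 + b • w2).2
      = a * ((p.1 : ℝ) * w1.1 + (p.2 : ℝ) * w1.2)
        + b * ((p.1 : ℝ) * w2.1 + (p.2 : ℝ) * w2.2) := by
  simp [Prod.smul_fst, Prod.smul_snd, smul_eq_mul]
  ring

/-- nonstrict convexity of the Laplace transform along a segment -/
private lemma conv_le (μ : ℤ × ℤ → ℝ) (hμ0 : ∀ p, 0 ≤ μ p)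
    (hexp : ∀ w : ℝ × ℝ,
      Summable (fun p : ℤ × ℤ => μ p * Real.exp ((p.1 : ℝ) * w.1 + (p.2 : ℝ) * w.2)))
    (w1 w2 : ℝ × ℝ) (a b : ℝ) (ha : 0 ≤ a) (hb : 0 ≤ b) (hab : a + b = 1) :
    (∑' p : ℤ × ℤ, μ p * Real.exp ((p.1 : ℝ) * (a • w1 + b • w2).1 + (p.2 : ℝ) * (a • w1 + b • w2).2))
      ≤ a * (∑' p : ℤ × ℤ, μ p * Real.exp ((p.1 : ℝ) * w1.1 + (p.2 : ℝ) * w1.2))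
        + b * (∑' p : ℤ × ℤ, μ p * Real.exp ((p.1 : ℝ) * w2.1 + (p.2 : ℝ) * w2.2)) := by
  have key : ∀ p : ℤ × ℤ,
      μ p * Real.exp ((p.1 : ℝ) * (a • w1 + b • w2).1 + (p.2 : ℝ) * (a • w1 + b • w2).2)
        ≤ a * (μ p * Real.exp ((p.1 : ℝ) * w1.1 + (p.2 : ℝ) * w1.2))
          + b * (μ p * Real.exp ((p.1 : ℝ) * w2.1 + (p.2 : ℝ) * w2.2)) := by
    intro p
    rw [gmix]
    have := convexOn_exp.2 (Set.mem_univ ((p.1 : ℝ) * w1.1 + (p.2 : ℝ) * w1.2))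
      (Set.mem_univ ((p.1 : ℝ) * w2.1 + (p.2 : ℝ) * w2.2)) ha hb hab
    simp only [smul_eq_mul] at this
    nlinarith [hμ0 p, Real.exp_pos ((p.1 : ℝ) * w1.1 + (p.2 : ℝ) * w1.2),
      Real.exp_pos ((p.1 : ℝ) * w2.1 + (p.2 : ℝ) * w2.2)]
  calc (∑' p : ℤ × ℤ, μ p * Real.exp ((p.1 : ℝ) * (a • w1 + b • w2).1 + (p.2 : ℝ) * (a • w1 + b • w2).2))
      ≤ ∑' p : ℤ × ℤ, (a * (μ p * Real.exp ((p.1 : ℝ) * w1.1 + (p.2 : ℝ) * w1.2))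
          + b * (μ p * Real.exp ((p.1 : ℝ) * w2.1 + (p.2 : ℝ) * w2.2))) :=
        Summable.tsum_le_tsum key (hexp _) (((hexp w1).mul_left a).add ((hexp w2).mul_left b))
    _ = _ := by
        rw [Summable.tsum_add ((hexp w1).mul_left a) ((hexp w2).mul_left b), tsum_mul_left, tsum_mul_left]

/-- strict convexity, given a witness -/
private lemma conv_lt (μ : ℤ × ℤ → ℝ) (hμ0 : ∀ p, 0 ≤ μ p)
    (hexp : ∀ w : ℝ × ℝ,
      Summable (fun p : ℤ × ℤ => μ p * Real.exp ((p.1 : ℝ) * w.1 + (p.2 : ℝ) * w.2)))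
    (w1 w2 : ℝ × ℝ) (a b : ℝ) (ha : 0 < a) (hb : 0 < b) (hab : a + b = 1)
    (p0 : ℤ × ℤ) (hp0 : μ p0 ≠ 0)
    (hne : (p0.1 : ℝ) * w1.1 + (p0.2 : ℝ) * w1.2 ≠ (p0.1 : ℝ) * w2.1 + (p0.2 : ℝ) * w2.2) :
    (∑' p : ℤ × ℤ, μ p * Real.exp ((p.1 : ℝ) * (a • w1 + b • w2).1 + (p.2 : ℝ) * (a • w1 + b • w2).2))
      < a * (∑' p : ℤ × ℤ, μ p * Real.exp ((p.1 : ℝ) * w1.1 + (p.2 : ℝ) * w1.2))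
        + b * (∑' p : ℤ × ℤ, μ p * Real.exp ((p.1 : ℝ) * w2.1 + (p.2 : ℝ) * w2.2)) := by
  have hμpos : 0 < μ p0 := lt_of_le_of_ne (hμ0 p0) (Ne.symm hp0)
  have key : ∀ p : ℤ × ℤ,
      μ p * Real.exp ((p.1 : ℝ) * (a • w1 + b • w2).1 + (p.2 : ℝ) * (a • w1 + b • w2).2)
        ≤ a * (μ p * Real.exp ((p.1 : ℝ) * w1.1 + (p.2 : ℝ) * w1.2))
          + b * (μ p * Real.exp ((p.1 : ℝ) * w2.1 + (p.2 : ℝ) * w2.2)) := by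
    intro p
    rw [gmix]
    have := convexOn_exp.2 (Set.mem_univ ((p.1 : ℝ) * w1.1 + (p.2 : ℝ) * w1.2))
      (Set.mem_univ ((p.1 : ℝ) * w2.1 + (p.2 : ℝ) * w2.2)) ha.le hb.le hab
    simp only [smul_eq_mul] at this
    nlinarith [hμ0 p]
  have keystrict :
      μ p0 * Real.exp ((p0.1 : ℝ) * (a • w1 + b • w2).1 + (p0.2 : ℝ) * (a • w1 + b • w2).2)
        < a * (μ p0 * Real.exp ((p0.1 : ℝ) * w1.1 + (p0.2 : ℝ) * w1.2))
          + b * (μ p0 * Real.exp ((p0.1 : ℝ) * w2.1 + (p0.2 : ℝ) * w2.2)) := by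
    rw [gmix]
    have := strictConvexOn_exp.2 (Set.mem_univ ((p0.1 : ℝ) * w1.1 + (p0.2 : ℝ) * w1.2))
      (Set.mem_univ ((p0.1 : ℝ) * w2.1 + (p0.2 : ℝ) * w2.2)) hne ha hb hab
    simp only [smul_eq_mul] at this
    nlinarith
  calc (∑' p : ℤ × ℤ, μ p * Real.exp ((p.1 : ℝ) * (a • w1 + b • w2).1 + (p.2 : ℝ) * (a • w1 + b • w2).2))
      < ∑' p : ℤ × ℤ, (a * (μ p * Real.exp ((p.1 : ℝ) * w1.1 + (p.2 : ℝ) * w1.2))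
          + b * (μ p * Real.exp ((p.1 : ℝ) * w2.1 + (p.2 : ℝ) * w2.2))) :=
        Summable.tsum_lt_tsum key keystrict (hexp _) (((hexp w1).mul_left a).add ((hexp w2).mul_left b))
    _ = _ := by
        rw [Summable.tsum_add ((hexp w1).mul_left a) ((hexp w2).mul_left b), tsum_mul_left, tsum_mul_left]

/-- irreducibility witness -/
private lemma irr_witness (μ : ℤ × ℤ → ℝ)
    (hirr : AddSubgroup.closure {p : ℤ × ℤ | μ p ≠ 0} = ⊤) (d : ℝ × ℝ) (hd : d ≠ 0) :
    ∃ p : ℤ × ℤ, μ p ≠ 0 ∧ (p.1 : ℝ) * d.1 + (p.2 : ℝ) * d.2 ≠ 0 := by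
  by_contra h
  push_neg at h
  set S : AddSubgroup (ℤ × ℤ) :=
    { carrier := {p : ℤ × ℤ | (p.1 : ℝ) * d.1 + (p.2 : ℝ) * d.2 = 0}
      zero_mem' := by simp
      add_mem' := by
        intro x y hx hy
        simp only [Set.mem_setOf_eq, Prod.fst_add, Prod.snd_add, Int.cast_add] at *
        nlinarith
      neg_mem' := by
        intro x hx
        simp only [Set.mem_setOf_eq, Prod.fst_neg, Prod.snd_neg, Int.cast_neg] at *
        nlinarith } with hS
  have hsub : {p : ℤ × ℤ | μ p ≠ 0} ⊆ (S : Set (ℤ × ℤ)) := fun p hp => h p hp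
  have : (⊤ : AddSubgroup (ℤ × ℤ)) ≤ S := by
    rw [← hirr]; exact AddSubgroup.closure_le S |>.2 hsub
  have h1 : ((1, 0) : ℤ × ℤ) ∈ S := this (by trivial)
  have h2 : ((0, 1) : ℤ × ℤ) ∈ S := this (by trivial)
  simp only [hS, AddSubgroup.mem_mk, Set.mem_setOf_eq] at h1 h2
  norm_num at h1 h2
  exact hd (Prod.ext h1 h2)




/-- Key inequality on the kernel curve: for a probability measure `μ` on `ℤ²` with exponential
moments, negative drift in both coordinates, irreducible support, and whose Gauss map is a
bijection from the curve `𝒬 = {(u,v) : ∑ μ(i,j) e^{iu+jv} = 1}` onto the unit circle, every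
point `(u,v) ∈ 𝒬 ∩ (0,∞)²` satisfies `u + t v > min{u₀, t v₀}` for every `t > 0`. -/
theorem stmt16 (μ : ℤ × ℤ → ℝ) (hμ0 : ∀ p, 0 ≤ μ p) (hμ1 : HasSum μ 1)
    (hexp : ∀ w : ℝ × ℝ,
      Summable (fun p : ℤ × ℤ => μ p * Real.exp ((p.1 : ℝ) * w.1 + (p.2 : ℝ) * w.2)))
    (hm1s : Summable fun p : ℤ × ℤ => μ p * (p.1 : ℝ))
    (hm1 : ∑' p : ℤ × ℤ, μ p * (p.1 : ℝ) < 0)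
    (hm2s : Summable fun p : ℤ × ℤ => μ p * (p.2 : ℝ))
    (hm2 : ∑' p : ℤ × ℤ, μ p * (p.2 : ℝ) < 0)
    (hirr : AddSubgroup.closure {p : ℤ × ℤ | μ p ≠ 0} = ⊤)
    (F : ℝ × ℝ → ℝ)
    (hF : ∀ w, F w = ∑' p : ℤ × ℤ, μ p * Real.exp ((p.1 : ℝ) * w.1 + (p.2 : ℝ) * w.2))
    (Q : Set (ℝ × ℝ)) (hQ : Q = {w | F w = 1})
    (u0 v0 : ℝ) (hu0 : 0 < u0) (hv0 : 0 < v0)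
    (hu0Q : ((u0, 0) : ℝ × ℝ) ∈ Q) (hv0Q : ((0, v0) : ℝ × ℝ) ∈ Q)
    (gradF : ℝ × ℝ → ℝ × ℝ)
    (hgrad : ∀ w, HasFDerivAt F
      ((gradF w).1 • ContinuousLinearMap.fst ℝ ℝ ℝ
        + (gradF w).2 • ContinuousLinearMap.snd ℝ ℝ ℝ) w)
    (hGauss : Set.BijOn (fun w => (‖gradF w‖)⁻¹ • gradF w) Q {v : ℝ × ℝ | ‖v‖ = 1}) :
    ∀ t : ℝ, 0 < t → ∀ w : ℝ × ℝ, w ∈ Q → 0 < w.1 → 0 < w.2 →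
      min u0 (t * v0) < w.1 + t * w.2 := by
  intro t ht w hw hwu hwv
  by_contra hcon
  push_neg at hcon
  have hFw : F w = 1 := by rw [hQ] at hw; exact hw
  have hF00 : F (0, 0) = 1 := by
    rw [hF]; simpa using hμ1.tsum_eq
  have hFu0 : F (u0, 0) = 1 := by rw [hQ] at hu0Q; exact hu0Q
  have hFv0 : F (0, v0) = 1 := by rw [hQ] at hv0Q; exact hv0Q
  have hum : w.1 + t * w.2 ≤ u0 := hcon.trans (min_le_left _ _)
  have hvm : w.1 + t * w.2 ≤ t * v0 := hcon.trans (min_le_right _ _)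
  have hul : w.1 < u0 := by nlinarith [mul_pos ht hwv]
  have hvl : w.2 < v0 := (mul_lt_mul_iff_right₀ ht).1 (by linarith)
  set a := w.1 / u0 with ha_def
  set b := w.2 / v0 with hb_def
  have ha : 0 < a := div_pos hwu hu0
  have hb : 0 < b := div_pos hwv hv0
  have hab1 : a + b ≤ 1 := by
    rw [ha_def, hb_def, div_add_div _ _ hu0.ne' hv0.ne', div_le_one (mul_pos hu0 hv0)]
    rcases le_total u0 (t * v0) with hc | hc
    · nlinarith [mul_nonneg hwv.le (sub_nonneg.2 hc), mul_le_mul_of_nonneg_right hum hv0.le]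
    · have h3 : t * (w.1 * v0 + u0 * w.2) ≤ t * (u0 * v0) := by
        nlinarith [mul_nonneg hwu.le (sub_nonneg.2 hc), mul_le_mul_of_nonneg_right hvm hu0.le]
      exact le_of_mul_le_mul_left h3 ht
  have ha1 : a < 1 := (div_lt_one hu0).2 hul
  set s := 1 - a with hs_def
  have hs : 0 < s := by linarith
  have hbs : b / s ≤ 1 := by rw [div_le_one hs]; linarith
  have hbs0 : 0 < b / s := div_pos hb hs
  set z : ℝ × ℝ := (0, (b / s) * v0) with hz_def
  have hzmix : z = (b / s) • ((0 : ℝ), v0) + (1 - b / s) • ((0 : ℝ), (0 : ℝ)) := by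
    rw [Prod.ext_iff]
    constructor <;> simp [hz_def, smul_eq_mul]
  have hFzle : F z ≤ 1 := by
    have h2 := conv_le μ hμ0 hexp ((0 : ℝ), v0) ((0 : ℝ), (0 : ℝ)) (b / s) (1 - b / s)
      hbs0.le (by linarith) (by ring)
    rw [← hF, ← hF, ← hF, ← hzmix] at h2
    calc F z ≤ (b / s) * F (0, v0) + (1 - b / s) * F (0, 0) := h2
      _ = 1 := by rw [hFv0, hF00]; ring
  have hwmix : w = a • ((u0, 0) : ℝ × ℝ) + s • z := by
    rw [Prod.ext_iff]
    constructor
    · simp only [Prod.fst_add, Prod.smul_fst, smul_eq_mul, hz_def]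
      rw [ha_def]
      field_simp
      ring
    · simp only [Prod.snd_add, Prod.smul_snd, smul_eq_mul, hz_def]
      rw [hb_def]
      field_simp [hs.ne']
      ring
  have hdne : ((u0, 0) : ℝ × ℝ) - z ≠ 0 := by
    intro h
    have := congrArg Prod.fst h
    simp [hz_def] at this
    exact hu0.ne' this
  obtain ⟨p0, hp0, hp0d⟩ := irr_witness μ hirr (((u0, 0) : ℝ × ℝ) - z) hdne
  have hne : (p0.1 : ℝ) * ((u0, 0) : ℝ × ℝ).1 + (p0.2 : ℝ) * ((u0, 0) : ℝ × ℝ).2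
      ≠ (p0.1 : ℝ) * z.1 + (p0.2 : ℝ) * z.2 := by
    intro heq
    apply hp0d
    simp only [hz_def] at heq
    simp only [Prod.fst_sub, Prod.snd_sub, hz_def]
    ring_nf
    ring_nf at heq
    linarith [heq]
  have hlt : F w < a * F (u0, 0) + s * F z := by
    have h2 := conv_lt μ hμ0 hexp ((u0, 0) : ℝ × ℝ) z a s ha hs (by ring) p0 hp0 hne
    rw [← hF, ← hF, ← hF, ← hwmix] at h2
    exact h2
  rw [hFw, hFu0] at hlt
  nlinarith [mul_le_mul_of_nonneg_left hFzle hs.le]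
end

section
/- Let $A_1,A_2,B_1,B_2 > 0$, $y_1>1$, $t_0>0$, and define for $(i,j)\in\mathbb{N}^2$ the ratio $k(i,j) = \frac{A_1 y_1^{\,j - i t_0} + A_2}{B_1 y_1^{\,j - i t_0} + B_2}$. If $t_0 = n_0/m_0$ is rational (in lowest terms), then the set of limit points of $k(i,j)$ as $i+j\to\infty$ with $j/i\to t_0$ is the countable discrete set $\Big\{\frac{A_1 y_1^{n/m_0}+A_2}{B_1 y_1^{n/m_0}+B_2} : n\in\mathbb{Z}\Big\}\cup\Big\{\frac{A_1}{B_1},\frac{A_2}{B_2}\Big\}$, whereas if $t_0$ is irrational, the set of limit points is the full interval $\Big\{\frac{A_1 u + A_2}{B_1 u + B_2} : u\in[0,\infty]\Big\}$ (a continuum homeomorphic to a closed interval). -/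
set_option maxHeartbeats 1000000

open Filter Real


private lemma aux_Gtop (A1 A2 B1 B2 : ℝ) (hB1 : 0 < B1) (hB2 : 0 < B2) :
    Tendsto (fun u : ℝ => (A1 * u + A2) / (B1 * u + B2)) atTop (nhds (A1 / B1)) := by
  have h : Tendsto (fun u : ℝ => (A1 + A2 * u⁻¹) / (B1 + B2 * u⁻¹)) atTop
      (nhds ((A1 + A2 * 0) / (B1 + B2 * 0))) := by
    refine Tendsto.div ?_ ?_ (by simpa using hB1.ne')
    · exact tendsto_const_nhds.add (tendsto_const_nhds.mul tendsto_inv_atTop_zero)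
    · exact tendsto_const_nhds.add (tendsto_const_nhds.mul tendsto_inv_atTop_zero)
  simp only [mul_zero, add_zero] at h
  refine h.congr' ?_
  filter_upwards [eventually_gt_atTop (0:ℝ)] with u hu
  have hu' : u ≠ 0 := hu.ne'
  have h2 : 0 < B1 * u + B2 := by positivity
  have h3 : 0 < B1 + B2 * u⁻¹ := by positivity
  rw [div_eq_div_iff h3.ne' h2.ne']
  field_simp

private lemma aux_rpow_cont (y1 : ℝ) (hy1 : 1 < y1) : Continuous (fun s : ℝ => y1 ^ s) := by
  have hy0 : (0:ℝ) < y1 := lt_trans one_pos hy1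
  have h : (fun s : ℝ => y1 ^ s) = fun s => Real.exp (Real.log y1 * s) := by
    funext s; rw [Real.rpow_def_of_pos hy0]
  rw [h]
  exact Real.continuous_exp.comp (continuous_const.mul continuous_id)

private lemma aux_Fcont (A1 A2 B1 B2 y1 : ℝ) (hB1 : 0 < B1) (hB2 : 0 < B2) (hy1 : 1 < y1) :
    Continuous (fun s : ℝ => (A1 * y1 ^ s + A2) / (B1 * y1 ^ s + B2)) := by
  have hy0 : (0:ℝ) < y1 := lt_trans one_pos hy1
  refine Continuous.div
    ((continuous_const.mul (aux_rpow_cont y1 hy1)).add continuous_const)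
    ((continuous_const.mul (aux_rpow_cont y1 hy1)).add continuous_const) ?_
  intro s
  have := Real.rpow_pos_of_pos hy0 s
  positivity

private lemma aux_Ftop (A1 A2 B1 B2 y1 : ℝ) (hB1 : 0 < B1) (hB2 : 0 < B2) (hy1 : 1 < y1) :
    Tendsto (fun s : ℝ => (A1 * y1 ^ s + A2) / (B1 * y1 ^ s + B2)) atTop (nhds (A1 / B1)) := by
  have hy0 : (0:ℝ) < y1 := lt_trans one_pos hy1
  have hr : Tendsto (fun s : ℝ => y1 ^ s) atTop atTop := by
    have h := Real.tendsto_exp_atTop.comp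
      (Tendsto.const_mul_atTop (Real.log_pos hy1) (tendsto_id (α := ℝ)))
    refine h.congr fun s => ?_
    exact (Real.rpow_def_of_pos hy0 s).symm
  exact (aux_Gtop A1 A2 B1 B2 hB1 hB2).comp hr

private lemma aux_Fbot (A1 A2 B1 B2 y1 : ℝ) (hB1 : 0 < B1) (hB2 : 0 < B2) (hy1 : 1 < y1) :
    Tendsto (fun s : ℝ => (A1 * y1 ^ s + A2) / (B1 * y1 ^ s + B2)) atBot (nhds (A2 / B2)) := by
  have hG : ContinuousAt (fun u : ℝ => (A1 * u + A2) / (B1 * u + B2)) 0 := by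
    refine ContinuousAt.div (by fun_prop) (by fun_prop) ?_
    simpa using hB2.ne'
  have h := hG.tendsto.comp (tendsto_rpow_atBot_of_base_gt_one y1 hy1)
  simpa [Function.comp_def] using h

private lemma dense_approx (t0 : ℝ) (ht0 : 0 < t0) (hirr : Irrational t0) (σ ε : ℝ)
    (hε : 0 < ε) (N : ℕ) :
    ∃ i j : ℕ, N ≤ i ∧ |(j : ℝ) - (i : ℝ) * t0 - σ| < ε := by
  classical
  -- the subgroup ℤ + t0 ℤ
  set G : AddSubgroup ℝ :=
    { carrier := {x : ℝ | ∃ a b : ℤ, x = (a : ℝ) + (b : ℝ) * t0}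
      add_mem' := by
        rintro x y ⟨a, b, rfl⟩ ⟨c, d, rfl⟩
        exact ⟨a + c, b + d, by push_cast; ring⟩
      zero_mem' := ⟨0, 0, by norm_num⟩
      neg_mem' := by
        rintro x ⟨a, b, rfl⟩
        exact ⟨-a, -b, by push_cast; ring⟩ } with hGdef
  have hdense : Dense (G : Set ℝ) := by
    rcases AddSubgroup.dense_or_cyclic G with h | ⟨a, ha⟩
    · exact h
    · exfalso
      have h1 : (1 : ℝ) ∈ G := ⟨1, 0, by norm_num⟩
      have ht : t0 ∈ G := ⟨0, 1, by norm_num⟩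
      rw [ha, AddSubgroup.mem_closure_singleton] at h1 ht
      obtain ⟨n, hn⟩ := h1
      obtain ⟨m, hm⟩ := ht
      rw [zsmul_eq_mul] at hn hm
      have hn0 : n ≠ 0 := by
        rintro rfl
        norm_num at hn
      have hnR : (n : ℝ) ≠ 0 := Int.cast_ne_zero.mpr hn0
      refine hirr ⟨(m : ℚ) / (n : ℚ), ?_⟩
      push_cast
      rw [div_eq_iff hnR]
      linear_combination (n : ℝ) * hm - (m : ℝ) * hn
  -- a small nonzero element c - d*t0 with d > 0
  set δ := min ε 1 with hδdef
  have hδ0 : 0 < δ := lt_min hε one_pos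
  have hδε : δ ≤ ε := min_le_left _ _
  have hδ1 : δ ≤ 1 := min_le_right _ _
  obtain ⟨g, hgG, hg⟩ : ∃ g ∈ (G : Set ℝ), g ∈ Set.Ioo 0 δ :=
    hdense.exists_mem_open isOpen_Ioo ⟨δ / 2, by constructor <;> [positivity; linarith]⟩
  obtain ⟨a, b, rfl⟩ := hgG
  have hb0 : b ≠ 0 := by
    rintro rfl
    have h1 : (0:ℝ) < (a:ℝ) := by simpa using hg.1
    have h2 : (a:ℝ) < δ := by simpa using hg.2
    have h3 : (1:ℤ) ≤ a := by exact_mod_cast h1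
    have h4 : (1:ℝ) ≤ (a:ℝ) := by exact_mod_cast h3
    linarith
  obtain ⟨c, d, hd, hne, hlt⟩ : ∃ (c d : ℤ), 0 < d ∧ ((c:ℝ) - (d:ℝ) * t0 ≠ 0) ∧
      |(c:ℝ) - (d:ℝ) * t0| < δ := by
    rcases hb0.lt_or_gt with hbneg | hbpos
    · refine ⟨a, -b, by omega, ?_, ?_⟩
      · have he : ((a:ℝ) - ((-b : ℤ):ℝ) * t0) = (a:ℝ) + (b:ℝ) * t0 := by push_cast; ring
        rw [he]; exact ne_of_gt hg.1
      · have he : ((a:ℝ) - ((-b : ℤ):ℝ) * t0) = (a:ℝ) + (b:ℝ) * t0 := by push_cast; ring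
        rw [he, abs_of_pos hg.1]; exact hg.2
    · refine ⟨-a, b, hbpos, ?_, ?_⟩
      · have he : (((-a : ℤ)):ℝ) - (b:ℝ) * t0 = -((a:ℝ) + (b:ℝ) * t0) := by push_cast; ring
        rw [he]; exact neg_ne_zero.mpr (ne_of_gt hg.1)
      · have he : (((-a : ℤ)):ℝ) - (b:ℝ) * t0 = -((a:ℝ) + (b:ℝ) * t0) := by push_cast; ring
        rw [he, abs_neg, abs_of_pos hg.1]; exact hg.2
  set h : ℝ := (c:ℝ) - (d:ℝ) * t0 with hhdef
  have hhlt : |h| < ε := lt_of_lt_of_le hlt hδε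
  have hhle : h < ε := lt_of_le_of_lt (le_abs_self h) hhlt
  have hhge : -ε < h := neg_lt_of_abs_lt hhlt
  -- choose a large starting index i0
  obtain ⟨i0, hi0⟩ := exists_nat_ge (max (N : ℝ) ((|σ| + ε + 1) / t0))
  have hi0N : N ≤ i0 := by
    have := le_trans (le_max_left _ _) hi0
    exact_mod_cast this
  have hi0t : |σ| + ε + 1 ≤ (i0 : ℝ) * t0 := by
    have h1 : (|σ| + ε + 1) / t0 ≤ (i0 : ℝ) := le_trans (le_max_right _ _) hi0
    calc |σ| + ε + 1 = ((|σ| + ε + 1) / t0) * t0 := by field_simp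
    _ ≤ (i0 : ℝ) * t0 := by nlinarith
  rcases hne.lt_or_gt with hneg | hpos
  · -- h < 0 : start above σ and step down
    set j0 : ℕ := ⌈(i0:ℝ) * t0 + σ + ε⌉₊ with hj0def
    have hp0 : σ + ε ≤ (j0:ℝ) - (i0:ℝ) * t0 := by
      rcases le_or_gt ((i0:ℝ) * t0 + σ + ε) 0 with hle | hlt0
      · have : (0:ℝ) ≤ (j0:ℝ) := Nat.cast_nonneg _
        linarith
      · have := Nat.le_ceil ((i0:ℝ) * t0 + σ + ε)
        linarith
    have hex : ∃ m : ℕ, (j0:ℝ) + (m:ℝ) * h - (i0:ℝ) * t0 < σ + ε := by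
      obtain ⟨m, hm⟩ := exists_nat_ge ((σ + ε - (j0:ℝ) + (i0:ℝ) * t0) / h + 1)
      refine ⟨m, ?_⟩
      have h2 : (σ + ε - (j0:ℝ) + (i0:ℝ) * t0) / h < (m:ℝ) := by linarith
      have h3 := (div_lt_iff_of_neg hneg).mp h2
      linarith
    obtain ⟨m, hPm, hmin⟩ : ∃ m : ℕ, ((j0:ℝ) + (m:ℝ) * h - (i0:ℝ) * t0 < σ + ε) ∧
        ∀ k < m, ¬ ((j0:ℝ) + (k:ℝ) * h - (i0:ℝ) * t0 < σ + ε) :=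
      ⟨Nat.find hex, Nat.find_spec hex, fun k hk => Nat.find_min hex hk⟩
    have hm0 : m ≠ 0 := by
      intro h0
      rw [h0] at hPm
      simp only [Nat.cast_zero, zero_mul, add_zero] at hPm
      linarith
    have h1m : 1 ≤ m := Nat.one_le_iff_ne_zero.mpr hm0
    have hprev : ¬ ((j0:ℝ) + ((m - 1 : ℕ):ℝ) * h - (i0:ℝ) * t0 < σ + ε) :=
      hmin _ (by omega)
    push_neg at hprev
    have hcast : ((m - 1 : ℕ):ℝ) = (m:ℝ) - 1 := by push_cast [h1m]; ring
    rw [hcast] at hprev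
    have hlower : σ - ε < (j0:ℝ) + (m:ℝ) * h - (i0:ℝ) * t0 := by nlinarith
    -- the integer numerator J = j0 + m * c is nonnegative
    have hJR : ((j0:ℤ) + (m:ℤ) * c : ℤ) = (j0:ℤ) + (m:ℤ) * c := rfl
    have hJval : (((j0:ℤ) + (m:ℤ) * c : ℤ) : ℝ)
        = (j0:ℝ) + (m:ℝ) * h + (m:ℝ) * (d:ℝ) * t0 := by
      rw [hhdef]; push_cast; ring
    have hJpos : 0 < ((j0:ℤ) + (m:ℤ) * c : ℤ) := by
      have hmd : (0:ℝ) ≤ (m:ℝ) * (d:ℝ) * t0 := by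
        have : (0:ℝ) ≤ (d:ℝ) := by exact_mod_cast hd.le
        positivity
      have h1 : (0:ℝ) < (((j0:ℤ) + (m:ℤ) * c : ℤ) : ℝ) := by
        rw [hJval]
        nlinarith [neg_abs_le σ]
      exact_mod_cast h1
    refine ⟨i0 + m * d.toNat, ((j0:ℤ) + (m:ℤ) * c).toNat,
      le_trans hi0N (Nat.le_add_right _ _), ?_⟩
    have hdt : ((d.toNat : ℕ) : ℝ) = (d : ℝ) := by
      rw [← Int.cast_natCast, Int.toNat_of_nonneg hd.le]
    have hjt : (((((j0:ℤ) + (m:ℤ) * c).toNat : ℕ)) : ℝ) = (((j0:ℤ) + (m:ℤ) * c : ℤ) : ℝ) := by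
      rw [← Int.cast_natCast, Int.toNat_of_nonneg hJpos.le]
    have hi : ((i0 + m * d.toNat : ℕ) : ℝ) = (i0 : ℝ) + (m : ℝ) * (d : ℝ) := by
      push_cast
      rw [hdt]
    rw [hjt, hJval, hi, abs_lt]
    constructor <;> nlinarith
  · -- h > 0 : start below σ and step up
    have hcpos : 0 < c := by
      have h1 : (0:ℝ) < (c:ℝ) := by
        have h2 : 0 < (d:ℝ) * t0 := by
          have : (0:ℝ) < (d:ℝ) := by exact_mod_cast hd
          positivity
        nlinarith [hpos]
      exact_mod_cast h1
    have hex : ∃ m : ℕ, σ - ε < (m:ℝ) * h - (i0:ℝ) * t0 := by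
      obtain ⟨m, hm⟩ := exists_nat_ge ((σ - ε + (i0:ℝ) * t0) / h + 1)
      refine ⟨m, ?_⟩
      have h2 : (σ - ε + (i0:ℝ) * t0) / h < (m:ℝ) := by linarith
      have h3 := (div_lt_iff₀ hpos).mp h2
      linarith
    obtain ⟨m, hPm, hmin⟩ : ∃ m : ℕ, (σ - ε < (m:ℝ) * h - (i0:ℝ) * t0) ∧
        ∀ k < m, ¬ (σ - ε < (k:ℝ) * h - (i0:ℝ) * t0) :=
      ⟨Nat.find hex, Nat.find_spec hex, fun k hk => Nat.find_min hex hk⟩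
    have hm0 : m ≠ 0 := by
      intro h0
      rw [h0] at hPm
      simp only [Nat.cast_zero, zero_mul, zero_sub] at hPm
      nlinarith [neg_abs_le σ]
    have h1m : 1 ≤ m := Nat.one_le_iff_ne_zero.mpr hm0
    have hprev : ¬ (σ - ε < ((m - 1 : ℕ):ℝ) * h - (i0:ℝ) * t0) :=
      hmin _ (by omega)
    push_neg at hprev
    have hcast : ((m - 1 : ℕ):ℝ) = (m:ℝ) - 1 := by
      push_cast [h1m]; ring
    rw [hcast] at hprev
    have hupper : (m:ℝ) * h - (i0:ℝ) * t0 < σ + ε := by nlinarith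
    refine ⟨i0 + m * d.toNat, m * c.toNat, le_trans hi0N (Nat.le_add_right _ _), ?_⟩
    have hdt : ((d.toNat : ℕ) : ℝ) = (d : ℝ) := by
      rw [← Int.cast_natCast, Int.toNat_of_nonneg hd.le]
    have hct : ((c.toNat : ℕ) : ℝ) = (c : ℝ) := by
      rw [← Int.cast_natCast, Int.toNat_of_nonneg hcpos.le]
    have hj : ((m * c.toNat : ℕ) : ℝ) = (m : ℝ) * (c : ℝ) := by
      push_cast
      rw [hct]
    have hi : ((i0 + m * d.toNat : ℕ) : ℝ) = (i0 : ℝ) + (m : ℝ) * (d : ℝ) := by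
      push_cast
      rw [hdt]
    rw [hj, hi]
    have he : (m : ℝ) * (c : ℝ) - ((i0 : ℝ) + (m : ℝ) * (d : ℝ)) * t0 - σ
        = ((m:ℝ) * h - (i0:ℝ) * t0) - σ := by rw [hhdef]; ring
    rw [he, abs_lt]
    constructor <;> linarith

private lemma aux_one_over (c : ℝ) : Tendsto (fun k : ℕ => c / ((k:ℝ) + 1)) atTop (nhds 0) := by
  have h1 : Tendsto (fun k : ℕ => (k:ℝ) + 1) atTop atTop :=
    tendsto_atTop_add_const_right _ 1 tendsto_natCast_atTop_atTop
  have h2 := (tendsto_inv_atTop_zero).comp h1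
  have h3 := h2.const_mul c
  simp only [mul_zero] at h3
  refine h3.congr fun k => ?_
  simp [div_eq_mul_inv, Function.comp]

private lemma con_top (t0 : ℝ) (ht0 : 0 < t0) :
    ∃ i j : ℕ → ℕ, Tendsto i atTop atTop ∧
      Tendsto (fun k => ((j k : ℝ) - (i k : ℝ) * t0) / (i k : ℝ)) atTop (nhds 0) ∧
      Tendsto (fun k => (j k : ℝ) - (i k : ℝ) * t0) atTop atTop := by
  refine ⟨fun k => (k + 1) ^ 2, fun k => ⌈((k:ℝ) + 1) ^ 2 * t0⌉₊ + (k + 1), ?_, ?_, ?_⟩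
  · exact tendsto_atTop_mono
      (fun k => le_trans (Nat.le_succ k) (Nat.le_self_pow two_ne_zero _)) tendsto_id
  · -- squeeze
    refine squeeze_zero_norm (fun k => ?_) (aux_one_over 2)
    have hK : (1:ℝ) ≤ (k:ℝ) + 1 := by linarith [Nat.cast_nonneg (α := ℝ) k]
    have hc1 : ((k:ℝ) + 1) ^ 2 * t0 ≤ (⌈((k:ℝ) + 1) ^ 2 * t0⌉₊ : ℝ) := Nat.le_ceil _
    have hc2 : (⌈((k:ℝ) + 1) ^ 2 * t0⌉₊ : ℝ) < ((k:ℝ) + 1) ^ 2 * t0 + 1 :=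
      Nat.ceil_lt_add_one (by positivity)
    have hi : (((k + 1) ^ 2 : ℕ) : ℝ) = ((k:ℝ) + 1) ^ 2 := by push_cast; ring
    have hj : ((⌈((k:ℝ) + 1) ^ 2 * t0⌉₊ + (k + 1) : ℕ) : ℝ)
        = (⌈((k:ℝ) + 1) ^ 2 * t0⌉₊ : ℝ) + ((k:ℝ) + 1) := by push_cast; ring
    rw [hi, hj]
    set K := (k:ℝ) + 1
    set C := (⌈K ^ 2 * t0⌉₊ : ℝ)
    have hs0 : (0:ℝ) ≤ C + K - K ^ 2 * t0 := by nlinarith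
    rw [Real.norm_eq_abs, abs_of_nonneg (by positivity : (0:ℝ) ≤ (C + K - K ^ 2 * t0) / K ^ 2)]
    rw [div_le_div_iff₀ (by positivity) (by positivity)]
    nlinarith
  · refine tendsto_atTop_mono' atTop ?_
      (tendsto_atTop_add_const_right _ 1 tendsto_natCast_atTop_atTop)
    filter_upwards with k
    have hc1 : ((k:ℝ) + 1) ^ 2 * t0 ≤ (⌈((k:ℝ) + 1) ^ 2 * t0⌉₊ : ℝ) := Nat.le_ceil _
    have hi : (((k + 1) ^ 2 : ℕ) : ℝ) = ((k:ℝ) + 1) ^ 2 := by push_cast; ring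
    have hj : ((⌈((k:ℝ) + 1) ^ 2 * t0⌉₊ + (k + 1) : ℕ) : ℝ)
        = (⌈((k:ℝ) + 1) ^ 2 * t0⌉₊ : ℝ) + ((k:ℝ) + 1) := by push_cast; ring
    rw [hi, hj]
    linarith

private lemma con_bot (t0 : ℝ) (ht0 : 0 < t0) :
    ∃ i j : ℕ → ℕ, Tendsto i atTop atTop ∧
      Tendsto (fun k => ((j k : ℝ) - (i k : ℝ) * t0) / (i k : ℝ)) atTop (nhds 0) ∧
      Tendsto (fun k => (j k : ℝ) - (i k : ℝ) * t0) atTop atBot := by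
  refine ⟨fun k => (k + 1) ^ 2, fun k => ⌊((k:ℝ) + 1) ^ 2 * t0⌋₊ - (k + 1), ?_, ?_, ?_⟩
  · exact tendsto_atTop_mono
      (fun k => le_trans (Nat.le_succ k) (Nat.le_self_pow two_ne_zero _)) tendsto_id
  · -- squeeze (eventual)
    refine squeeze_zero_norm' ?_ (aux_one_over 2)
    filter_upwards [eventually_ge_atTop ⌈2 / t0⌉₊] with k hk
    have hK : (1:ℝ) ≤ (k:ℝ) + 1 := by linarith [Nat.cast_nonneg (α := ℝ) k]
    have hKt : 2 ≤ ((k:ℝ) + 1) * t0 := by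
      have h1 : (⌈2 / t0⌉₊ : ℝ) ≤ (k:ℝ) := Nat.cast_le.mpr hk
      have h2 : 2 / t0 ≤ (⌈2 / t0⌉₊ : ℝ) := Nat.le_ceil _
      have h3 : 2 / t0 ≤ (k:ℝ) + 1 := by linarith
      rw [div_le_iff₀ ht0] at h3
      linarith
    have hK2 : ((k:ℝ) + 1) + 1 ≤ ((k:ℝ) + 1) ^ 2 * t0 := by nlinarith
    have hfl1 : (⌊((k:ℝ) + 1) ^ 2 * t0⌋₊ : ℝ) ≤ ((k:ℝ) + 1) ^ 2 * t0 :=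
      Nat.floor_le (by positivity)
    have hfl2 : ((k:ℝ) + 1) ^ 2 * t0 - 1 < (⌊((k:ℝ) + 1) ^ 2 * t0⌋₊ : ℝ) :=
      Nat.sub_one_lt_floor _
    have hnat : k + 1 ≤ ⌊((k:ℝ) + 1) ^ 2 * t0⌋₊ := by
      rw [Nat.le_floor_iff (by positivity)]
      push_cast
      linarith
    have hj : ((⌊((k:ℝ) + 1) ^ 2 * t0⌋₊ - (k + 1) : ℕ) : ℝ)
        = (⌊((k:ℝ) + 1) ^ 2 * t0⌋₊ : ℝ) - ((k:ℝ) + 1) := by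
      rw [Nat.cast_sub hnat]
      push_cast
      ring
    have hi : (((k + 1) ^ 2 : ℕ) : ℝ) = ((k:ℝ) + 1) ^ 2 := by push_cast; ring
    rw [hi, hj, Real.norm_eq_abs, abs_div]
    rw [abs_of_pos (by positivity : (0:ℝ) < ((k:ℝ) + 1) ^ 2)]
    rw [div_le_div_iff₀ (by positivity) (by positivity)]
    have habs : |(⌊((k:ℝ) + 1) ^ 2 * t0⌋₊ : ℝ) - ((k:ℝ) + 1) - ((k:ℝ) + 1) ^ 2 * t0|
        ≤ ((k:ℝ) + 1) + 1 := by
      rw [abs_le]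
      constructor <;> linarith
    nlinarith
  · -- tendsto atBot
    have hbot : Tendsto (fun k : ℕ => -((k:ℝ) + 1)) atTop atBot :=
      tendsto_neg_atTop_atBot.comp
        (tendsto_atTop_add_const_right _ 1 tendsto_natCast_atTop_atTop)
    refine tendsto_atBot_mono' atTop ?_ hbot
    filter_upwards [eventually_ge_atTop ⌈2 / t0⌉₊] with k hk
    have hK : (1:ℝ) ≤ (k:ℝ) + 1 := by linarith [Nat.cast_nonneg (α := ℝ) k]
    have hKt : 2 ≤ ((k:ℝ) + 1) * t0 := by
      have h1 : (⌈2 / t0⌉₊ : ℝ) ≤ (k:ℝ) := Nat.cast_le.mpr hk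
      have h2 : 2 / t0 ≤ (⌈2 / t0⌉₊ : ℝ) := Nat.le_ceil _
      have h3 : 2 / t0 ≤ (k:ℝ) + 1 := by linarith
      rw [div_le_iff₀ ht0] at h3
      linarith
    have hK2 : ((k:ℝ) + 1) + 1 ≤ ((k:ℝ) + 1) ^ 2 * t0 := by nlinarith
    have hfl1 : (⌊((k:ℝ) + 1) ^ 2 * t0⌋₊ : ℝ) ≤ ((k:ℝ) + 1) ^ 2 * t0 :=
      Nat.floor_le (by positivity)
    have hnat : k + 1 ≤ ⌊((k:ℝ) + 1) ^ 2 * t0⌋₊ := by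
      rw [Nat.le_floor_iff (by positivity)]
      push_cast
      linarith
    have hj : ((⌊((k:ℝ) + 1) ^ 2 * t0⌋₊ - (k + 1) : ℕ) : ℝ)
        = (⌊((k:ℝ) + 1) ^ 2 * t0⌋₊ : ℝ) - ((k:ℝ) + 1) := by
      rw [Nat.cast_sub hnat]
      push_cast
      ring
    have hi : (((k + 1) ^ 2 : ℕ) : ℝ) = ((k:ℝ) + 1) ^ 2 := by push_cast; ring
    rw [hi, hj]
    linarith

private lemma intlim {z : ℕ → ℤ} {L : ℝ}
    (h : Tendsto (fun n => (z n : ℝ)) atTop (nhds L)) : ∃ m : ℤ, L = (m : ℝ) := by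
  have hmem : L ∈ Set.range ((↑) : ℤ → ℝ) :=
    Int.isClosedEmbedding_coe_real.isClosed_range.mem_of_tendsto h
      (Eventually.of_forall fun n => ⟨z n, rfl⟩)
  obtain ⟨m, hm⟩ := hmem
  exact ⟨m, hm.symm⟩

private lemma con_target (t0 : ℝ) (ht0 : 0 < t0) (hirr : Irrational t0) (σ : ℝ) :
    ∃ i j : ℕ → ℕ, Tendsto i atTop atTop ∧
      Tendsto (fun k => ((j k : ℝ) - (i k : ℝ) * t0) / (i k : ℝ)) atTop (nhds 0) ∧
      Tendsto (fun k => (j k : ℝ) - (i k : ℝ) * t0) atTop (nhds σ) := by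
  have H : ∀ k : ℕ, ∃ p : ℕ × ℕ, (k + 1 ≤ p.1) ∧
      |(p.2 : ℝ) - (p.1 : ℝ) * t0 - σ| < 1 / ((k:ℝ) + 1) := by
    intro k
    obtain ⟨i, j, hi, hj⟩ := dense_approx t0 ht0 hirr σ (1 / ((k:ℝ) + 1)) (by positivity) (k + 1)
    exact ⟨(i, j), hi, hj⟩
  choose p hp1 hp2 using H
  have hi : Tendsto (fun k => (p k).1) atTop atTop :=
    tendsto_atTop_mono (fun k => le_trans (Nat.le_succ k) (hp1 k)) tendsto_id
  have hiR : Tendsto (fun k => ((p k).1 : ℝ)) atTop atTop :=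
    tendsto_natCast_atTop_atTop.comp hi
  have hσ : Tendsto (fun k => ((p k).2 : ℝ) - ((p k).1 : ℝ) * t0) atTop (nhds σ) := by
    have h0 : Tendsto (fun k => (((p k).2 : ℝ) - ((p k).1 : ℝ) * t0) - σ) atTop (nhds 0) := by
      refine squeeze_zero_norm (fun k => ?_) (aux_one_over 1)
      exact (hp2 k).le
    have := h0.add_const σ
    simp only [sub_add_cancel, zero_add] at this
    exact this
  refine ⟨fun k => (p k).1, fun k => (p k).2, hi, ?_, hσ⟩
  refine squeeze_zero_norm' ?_ ((tendsto_const_nhds (x := |σ| + 1)).div_atTop hiR)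
  filter_upwards with k
  have h1 : |((p k).2 : ℝ) - ((p k).1 : ℝ) * t0| ≤ |σ| + 1 := by
    have h2 := (hp2 k).le
    have h3 : 1 / ((k:ℝ) + 1) ≤ 1 := by
      rw [div_le_one (by positivity)]
      linarith [Nat.cast_nonneg (α := ℝ) k]
    calc |((p k).2 : ℝ) - ((p k).1 : ℝ) * t0|
        ≤ |((p k).2 : ℝ) - ((p k).1 : ℝ) * t0 - σ| + |σ| := by
          have := abs_sub_abs_le_abs_sub (((p k).2 : ℝ) - ((p k).1 : ℝ) * t0) σ
          have := abs_add_le (((p k).2 : ℝ) - ((p k).1 : ℝ) * t0 - σ) σ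
          simp only [sub_add_cancel] at this
          linarith
      _ ≤ |σ| + 1 := by linarith
  have hp0 : (0:ℝ) ≤ ((p k).1 : ℝ) := Nat.cast_nonneg _
  rw [Real.norm_eq_abs, abs_div, abs_of_nonneg hp0]
  rcases eq_or_lt_of_le hp0 with h0 | h0
  · rw [← h0]
    simp
  · gcongr

private lemma con_const (t0 : ℝ) (ht0 : 0 < t0) (n0 m0 : ℤ) (hm0 : 0 < m0)
    (hgcd : Int.gcd n0 m0 = 1) (ht0eq : t0 = (n0 : ℝ) / (m0 : ℝ)) (n : ℤ) :
    ∃ i j : ℕ → ℕ, Tendsto i atTop atTop ∧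
      Tendsto (fun k => ((j k : ℝ) - (i k : ℝ) * t0) / (i k : ℝ)) atTop (nhds 0) ∧
      (∀ᶠ k in atTop, (j k : ℝ) - (i k : ℝ) * t0 = (n : ℝ) / (m0 : ℝ)) := by
  have hm0R : (0:ℝ) < (m0 : ℝ) := by exact_mod_cast hm0
  have hn0 : 0 < n0 := by
    have h1 : (0:ℝ) < (n0 : ℝ) / (m0 : ℝ) := ht0eq ▸ ht0
    have h2 : (0:ℝ) < (n0 : ℝ) := by
      by_contra h
      push_neg at h
      have h3 : (n0 : ℝ) / (m0 : ℝ) ≤ 0 := div_nonpos_of_nonpos_of_nonneg h hm0R.le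
      linarith
    exact_mod_cast h2
  -- Bezout
  have hbez : (1 : ℤ) = n0 * Int.gcdA n0 m0 + m0 * Int.gcdB n0 m0 := by
    have h := Int.gcd_eq_gcd_ab n0 m0
    rw [hgcd] at h
    exact_mod_cast h
  set α : ℤ := -(n * Int.gcdA n0 m0) with hα
  set β : ℤ := n * Int.gcdB n0 m0 with hβ
  have key : β * m0 - α * n0 = n := by
    rw [hα, hβ]
    linear_combination n * hbez.symm
  set N0 : ℕ := (max (-α) (-β)).toNat with hN0
  have hαk : ∀ k : ℕ, N0 ≤ k → 0 ≤ α + m0 * k := by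
    intro k hk
    have h1 : -α ≤ (N0 : ℤ) := le_trans (le_max_left _ _) (Int.self_le_toNat _)
    have h2 : (N0 : ℤ) ≤ (k : ℤ) := by exact_mod_cast hk
    have h3 : (k : ℤ) ≤ m0 * k := le_mul_of_one_le_left (by positivity) hm0
    omega
  have hβk : ∀ k : ℕ, N0 ≤ k → 0 ≤ β + n0 * k := by
    intro k hk
    have h1 : -β ≤ (N0 : ℤ) := le_trans (le_max_right _ _) (Int.self_le_toNat _)
    have h2 : (N0 : ℤ) ≤ (k : ℤ) := by exact_mod_cast hk
    have h3 : (k : ℤ) ≤ n0 * k := le_mul_of_one_le_left (by positivity) hn0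
    omega
  refine ⟨fun k => (α + m0 * k).toNat, fun k => (β + n0 * k).toNat, ?_, ?_, ?_⟩
  · -- tendsto atTop
    refine tendsto_atTop_mono' atTop ?_ (tendsto_sub_atTop_nat (-α).toNat)
    filter_upwards [eventually_ge_atTop N0] with k hk
    have h1 := hαk k hk
    have h2 : (((α + m0 * k).toNat : ℕ) : ℤ) = α + m0 * k := Int.toNat_of_nonneg h1
    have h3 : (k : ℤ) ≤ m0 * k := le_mul_of_one_le_left (by positivity) hm0
    have h4 : -α ≤ ((-α).toNat : ℤ) := Int.self_le_toNat _
    omega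
  · -- ratio to 0
    have hiR : Tendsto (fun k : ℕ => (((α + m0 * k).toNat : ℕ) : ℝ)) atTop atTop := by
      refine tendsto_atTop_mono' atTop ?_
        (tendsto_natCast_atTop_atTop.comp (tendsto_sub_atTop_nat (-α).toNat))
      filter_upwards [eventually_ge_atTop N0] with k hk
      have h1 := hαk k hk
      have h2 : (((α + m0 * k).toNat : ℕ) : ℤ) = α + m0 * k := Int.toNat_of_nonneg h1
      have h3 : (k : ℤ) ≤ m0 * k := le_mul_of_one_le_left (by positivity) hm0
      have h4 : -α ≤ ((-α).toNat : ℤ) := Int.self_le_toNat _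
      have h5 : k - (-α).toNat ≤ (α + m0 * k).toNat := by omega
      exact_mod_cast Nat.cast_le.mpr h5
    have hconst : ∀ᶠ k : ℕ in atTop,
        (((β + n0 * k).toNat : ℕ) : ℝ) - (((α + m0 * k).toNat : ℕ) : ℝ) * t0
          = (n : ℝ) / (m0 : ℝ) := by
      filter_upwards [eventually_ge_atTop N0] with k hk
      have h1 := hαk k hk
      have h2 := hβk k hk
      have h3 : ((((α + m0 * k).toNat : ℕ)) : ℝ) = ((α : ℝ) + (m0 : ℝ) * (k : ℝ)) := by
        rw [← Int.cast_natCast, Int.toNat_of_nonneg h1]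
        push_cast
        ring
      have h4 : ((((β + n0 * k).toNat : ℕ)) : ℝ) = ((β : ℝ) + (n0 : ℝ) * (k : ℝ)) := by
        rw [← Int.cast_natCast, Int.toNat_of_nonneg h2]
        push_cast
        ring
      rw [h3, h4, ht0eq]
      have keyR : (β : ℝ) * (m0 : ℝ) - (α : ℝ) * (n0 : ℝ) = (n : ℝ) := by exact_mod_cast key
      field_simp
      linear_combination keyR
    have h0 : Tendsto (fun k : ℕ => ((n : ℝ) / (m0 : ℝ)) / (((α + m0 * k).toNat : ℕ) : ℝ))
        atTop (nhds 0) := tendsto_const_nhds.div_atTop hiR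
    refine h0.congr' ?_
    filter_upwards [hconst] with k hk
    rw [hk]
  · -- eventual constancy
    filter_upwards [eventually_ge_atTop N0] with k hk
    have h1 := hαk k hk
    have h2 := hβk k hk
    have h3 : ((((α + m0 * k).toNat : ℕ)) : ℝ) = ((α : ℝ) + (m0 : ℝ) * (k : ℝ)) := by
      rw [← Int.cast_natCast, Int.toNat_of_nonneg h1]
      push_cast
      ring
    have h4 : ((((β + n0 * k).toNat : ℕ)) : ℝ) = ((β : ℝ) + (n0 : ℝ) * (k : ℝ)) := by
      rw [← Int.cast_natCast, Int.toNat_of_nonneg h2]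
      push_cast
      ring
    rw [h3, h4, ht0eq]
    have keyR : (β : ℝ) * (m0 : ℝ) - (α : ℝ) * (n0 : ℝ) = (n : ℝ) := by exact_mod_cast key
    field_simp
    linear_combination keyR

private lemma aux_mem (A1 A2 B1 B2 y1 t0 x : ℝ) (ht0 : 0 < t0) (i j : ℕ → ℕ)
    (hi : Tendsto i atTop atTop)
    (hs : Tendsto (fun k => ((j k : ℝ) - (i k : ℝ) * t0) / (i k : ℝ)) atTop (nhds 0))
    (hk : Tendsto (fun k =>
        (A1 * y1 ^ ((j k : ℝ) - (i k : ℝ) * t0) + A2) /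
          (B1 * y1 ^ ((j k : ℝ) - (i k : ℝ) * t0) + B2)) atTop (nhds x)) :
    ∃ u : ℕ → ℕ × ℕ,
      Tendsto (fun n => (u n).1 + (u n).2) atTop atTop ∧
      Tendsto (fun n => ((u n).2 : ℝ) / ((u n).1 : ℝ)) atTop (nhds t0) ∧
      Tendsto (fun n =>
          (A1 * y1 ^ (((u n).2 : ℝ) - ((u n).1 : ℝ) * t0) + A2) /
            (B1 * y1 ^ (((u n).2 : ℝ) - ((u n).1 : ℝ) * t0) + B2))
        atTop (nhds x) := by
  refine ⟨fun k => (i k, j k), ?_, ?_, hk⟩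
  · exact tendsto_atTop_mono (fun k => Nat.le_add_right _ _) hi
  · have h2 : Tendsto (fun k => t0 + ((j k : ℝ) - (i k : ℝ) * t0) / (i k : ℝ)) atTop
        (nhds (t0 + 0)) := tendsto_const_nhds.add hs
    rw [add_zero] at h2
    refine h2.congr' ?_
    filter_upwards [hi.eventually_gt_atTop 0] with k hk0
    have h0 : ((i k : ℕ) : ℝ) ≠ 0 := Nat.cast_ne_zero.mpr hk0.ne'
    field_simp
    ring

private lemma aux_forward (A1 A2 B1 B2 y1 x : ℝ)
    (hB1 : 0 < B1) (hB2 : 0 < B2) (hy1 : 1 < y1) (s : ℕ → ℝ)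
    (hx : Tendsto (fun n => (A1 * y1 ^ s n + A2) / (B1 * y1 ^ s n + B2)) atTop (nhds x)) :
    x = A1 / B1 ∨ x = A2 / B2 ∨
      ∃ σ : ℝ, x = (A1 * y1 ^ σ + A2) / (B1 * y1 ^ σ + B2) ∧
        ∃ φ : ℕ → ℕ, StrictMono φ ∧ Tendsto (fun n => s (φ n)) atTop (nhds σ) := by
  have hy0 : (0:ℝ) < y1 := lt_trans one_pos hy1
  set G : ℝ → ℝ := fun u => (A1 * u + A2) / (B1 * u + B2) with hG
  set U : ℕ → ℝ := fun n => y1 ^ s n with hU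
  have hU0 : ∀ n, 0 < U n := fun n => Real.rpow_pos_of_pos hy0 _
  set v : ℕ → ℝ := fun n => (1 + U n)⁻¹ with hv
  have hv0 : ∀ n, 0 < v n := fun n => inv_pos.mpr (by nlinarith [hU0 n])
  have hvmem : ∀ n, v n ∈ Set.Icc (0:ℝ) 1 := by
    intro n
    refine ⟨(hv0 n).le, ?_⟩
    rw [hv]
    have h1 : (1:ℝ) ≤ 1 + U n := by nlinarith [hU0 n]
    exact inv_le_one_of_one_le₀ h1
  obtain ⟨c, hcmem, φ, hφ, hvc⟩ := (isCompact_Icc (a := (0:ℝ)) (b := 1)).tendsto_subseq hvmem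
  have hxφ : Tendsto (fun n => G (U (φ n))) atTop (nhds x) := by
    have := hx.comp hφ.tendsto_atTop
    exact this
  have hGcont : ∀ w : ℝ, 0 ≤ w → ContinuousAt G w := by
    intro w hw
    refine ContinuousAt.div (by fun_prop) (by fun_prop) ?_
    nlinarith
  rcases eq_or_lt_of_le hcmem.1 with hc0 | hcpos
  · -- c = 0 : U ∘ φ → atTop, x = A1/B1
    left
    have h1 : Tendsto (fun n => v (φ n)) atTop (nhdsWithin 0 (Set.Ioi 0)) := by
      refine tendsto_nhdsWithin_of_tendsto_nhds_of_eventually_within _ ?_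
        (Eventually.of_forall fun n => hv0 (φ n))
    -- need: Tendsto (v ∘ φ) atTop (nhds 0)
      rw [hc0]; exact hvc
    have h2 : Tendsto (fun n => (v (φ n))⁻¹) atTop atTop := tendsto_inv_nhdsGT_zero.comp h1
    have h3 : (fun n => (v (φ n))⁻¹) = fun n => 1 + U (φ n) := by
      funext n; rw [hv]; exact inv_inv _
    have h4 : Tendsto (fun n => U (φ n)) atTop atTop := by
      have h5 := tendsto_atTop_add_const_right atTop (-1 : ℝ) (h3 ▸ h2)
      refine h5.congr fun n => by ring
    have h6 : Tendsto (fun n => G (U (φ n))) atTop (nhds (A1 / B1)) := by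
      have := (aux_Gtop A1 A2 B1 B2 hB1 hB2).comp h4
      exact this
    exact tendsto_nhds_unique hxφ h6
  · -- 0 < c : U ∘ φ converges to w := c⁻¹ - 1 ≥ 0
    have hUlim : Tendsto (fun n => U (φ n)) atTop (nhds (c⁻¹ - 1)) := by
      have h1 : Tendsto (fun n => (v (φ n))⁻¹) atTop (nhds c⁻¹) := hvc.inv₀ hcpos.ne'
      have h3 : (fun n => (v (φ n))⁻¹) = fun n => 1 + U (φ n) := by
        funext n; rw [hv]; exact inv_inv _
      have h2 := (h3 ▸ h1).add_const (-1 : ℝ)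
      have e1 : (fun k => 1 + U (φ k) + -1) = fun k => U (φ k) := by funext k; ring
      have e2 : c⁻¹ + -1 = c⁻¹ - 1 := by ring
      rw [e1, e2] at h2
      exact h2
    have hw0 : 0 ≤ c⁻¹ - 1 := by
      have hc1 : c ≤ 1 := hcmem.2
      have hcc : c * c⁻¹ = 1 := mul_inv_cancel₀ hcpos.ne'
      have hci : 0 < c⁻¹ := inv_pos.mpr hcpos
      nlinarith
    have hGw : Tendsto (fun n => G (U (φ n))) atTop (nhds (G (c⁻¹ - 1))) :=
      (hGcont _ hw0).tendsto.comp hUlim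
    have hxw : x = G (c⁻¹ - 1) := tendsto_nhds_unique hxφ hGw
    rcases eq_or_lt_of_le hw0 with hweq | hwpos
    · right; left
      rw [hxw, ← hweq, hG]
      norm_num
    · right; right
      refine ⟨Real.logb y1 (c⁻¹ - 1), ?_, φ, hφ, ?_⟩
      · rw [hxw, hG]
        rw [Real.rpow_logb (lt_trans one_pos hy1) (ne_of_gt hy1) hwpos]
      · have hsl : ∀ n, s (φ n) = Real.logb y1 (U (φ n)) := by
          intro n
          rw [hU]
          exact (Real.logb_rpow (lt_trans one_pos hy1) (ne_of_gt hy1)).symm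
        have hcont : Tendsto (fun n => Real.logb y1 (U (φ n))) atTop
            (nhds (Real.logb y1 (c⁻¹ - 1))) := by
          simp only [Real.logb]
          exact Tendsto.div_const ((Real.continuousAt_log hwpos.ne').tendsto.comp hUlim) _
        exact Tendsto.congr (fun n => (hsl n).symm) hcont

/-- Dichotomy behind the instability of the Martin boundary: the set of limit points of the
Möbius-type Martin kernels `k(i,j) = (A₁ y₁^{j - i t₀} + A₂)/(B₁ y₁^{j - i t₀} + B₂)` as
`i + j → ∞` with `j/i → t₀` is a discrete countable set when `t₀ = n₀/m₀` is rational (in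
lowest terms), and a full continuum `{(A₁u + A₂)/(B₁u + B₂) : u ∈ [0,∞]}` when `t₀` is
irrational. -/
theorem stmt19 (A1 A2 B1 B2 y1 t0 : ℝ)
    (hA1 : 0 < A1) (hA2 : 0 < A2) (hB1 : 0 < B1) (hB2 : 0 < B2)
    (hy1 : 1 < y1) (ht0 : 0 < t0) :
    (∀ n0 m0 : ℤ, 0 < m0 → Int.gcd n0 m0 = 1 → t0 = (n0 : ℝ) / (m0 : ℝ) →
      {x : ℝ | ∃ u : ℕ → ℕ × ℕ,
          Tendsto (fun n => (u n).1 + (u n).2) atTop atTop ∧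
          Tendsto (fun n => ((u n).2 : ℝ) / ((u n).1 : ℝ)) atTop (nhds t0) ∧
          Tendsto (fun n =>
              (A1 * y1 ^ (((u n).2 : ℝ) - ((u n).1 : ℝ) * t0) + A2) /
                (B1 * y1 ^ (((u n).2 : ℝ) - ((u n).1 : ℝ) * t0) + B2))
            atTop (nhds x)}
        = {x : ℝ | ∃ n : ℤ,
              x = (A1 * y1 ^ ((n : ℝ) / (m0 : ℝ)) + A2) /
                    (B1 * y1 ^ ((n : ℝ) / (m0 : ℝ)) + B2)}
            ∪ {A1 / B1, A2 / B2}) ∧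
    (Irrational t0 →
      {x : ℝ | ∃ u : ℕ → ℕ × ℕ,
          Tendsto (fun n => (u n).1 + (u n).2) atTop atTop ∧
          Tendsto (fun n => ((u n).2 : ℝ) / ((u n).1 : ℝ)) atTop (nhds t0) ∧
          Tendsto (fun n =>
              (A1 * y1 ^ (((u n).2 : ℝ) - ((u n).1 : ℝ) * t0) + A2) /
                (B1 * y1 ^ (((u n).2 : ℝ) - ((u n).1 : ℝ) * t0) + B2))
            atTop (nhds x)}
        = {x : ℝ | ∃ u : ℝ, 0 ≤ u ∧ x = (A1 * u + A2) / (B1 * u + B2)} ∪ {A1 / B1}) := by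
  have hy0 : (0:ℝ) < y1 := lt_trans one_pos hy1
  constructor
  · -- rational case
    intro n0 m0 hm0 hgcd ht0eq
    ext x
    simp only [Set.mem_setOf_eq, Set.mem_union, Set.mem_insert_iff, Set.mem_singleton_iff]
    constructor
    · rintro ⟨u, hu1, hu2, hu3⟩
      rcases aux_forward A1 A2 B1 B2 y1 x hB1 hB2 hy1
          (fun n => ((u n).2 : ℝ) - ((u n).1 : ℝ) * t0) hu3 with h | h | ⟨σ, hxσ, φ, hφ, hσ⟩
      · exact Or.inr (Or.inl h)
      · exact Or.inr (Or.inr h)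
      · left
        have hm0R : ((m0 : ℝ)) ≠ 0 := by
          have h0 : (0:ℝ) < (m0 : ℝ) := by exact_mod_cast hm0
          exact h0.ne'
        have hz : ∀ n : ℕ, ((((u n).2 : ℤ) * m0 - ((u n).1 : ℤ) * n0 : ℤ) : ℝ)
            = (((u n).2 : ℝ) - ((u n).1 : ℝ) * t0) * (m0 : ℝ) := by
          intro n
          rw [ht0eq]
          push_cast
          field_simp
        have hlim : Tendsto
            (fun n => ((((u (φ n)).2 : ℤ) * m0 - ((u (φ n)).1 : ℤ) * n0 : ℤ) : ℝ))
            atTop (nhds (σ * (m0 : ℝ))) := by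
          have h1 := hσ.mul_const ((m0 : ℝ))
          exact h1.congr fun n => (hz (φ n)).symm
        obtain ⟨q, hq⟩ := intlim hlim
        refine ⟨q, ?_⟩
        have hσq : σ = (q : ℝ) / (m0 : ℝ) := by
          rw [eq_div_iff hm0R]
          exact hq
        rw [hxσ, hσq]
    · rintro (⟨n, hn⟩ | h | h)
      · obtain ⟨i, j, hi, hs, hev⟩ := con_const t0 ht0 n0 m0 hm0 hgcd ht0eq n
        refine aux_mem A1 A2 B1 B2 y1 t0 x ht0 i j hi hs ?_
        rw [hn]
        refine Tendsto.congr' ?_ tendsto_const_nhds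
        filter_upwards [hev] with k hk
        rw [hk]
      · obtain ⟨i, j, hi, hs, htop⟩ := con_top t0 ht0
        refine aux_mem A1 A2 B1 B2 y1 t0 x ht0 i j hi hs ?_
        rw [h]
        exact (aux_Ftop A1 A2 B1 B2 y1 hB1 hB2 hy1).comp htop
      · obtain ⟨i, j, hi, hs, hbot⟩ := con_bot t0 ht0
        refine aux_mem A1 A2 B1 B2 y1 t0 x ht0 i j hi hs ?_
        rw [h]
        exact (aux_Fbot A1 A2 B1 B2 y1 hB1 hB2 hy1).comp hbot
  · -- irrational case
    intro hirr
    ext x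
    simp only [Set.mem_setOf_eq, Set.mem_union, Set.mem_singleton_iff]
    constructor
    · rintro ⟨u, hu1, hu2, hu3⟩
      rcases aux_forward A1 A2 B1 B2 y1 x hB1 hB2 hy1
          (fun n => ((u n).2 : ℝ) - ((u n).1 : ℝ) * t0) hu3 with h | h | ⟨σ, hxσ, φ, hφ, hσ⟩
      · exact Or.inr h
      · exact Or.inl ⟨0, le_refl 0, by rw [h]; norm_num⟩
      · exact Or.inl ⟨y1 ^ σ, (Real.rpow_pos_of_pos hy0 σ).le, hxσ⟩
    · rintro (⟨w, hw0, hxw⟩ | h)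
      · rcases eq_or_lt_of_le hw0 with hw | hw
        · obtain ⟨i, j, hi, hs, hbot⟩ := con_bot t0 ht0
          refine aux_mem A1 A2 B1 B2 y1 t0 x ht0 i j hi hs ?_
          have hx2 : x = A2 / B2 := by rw [hxw, ← hw]; norm_num
          rw [hx2]
          exact (aux_Fbot A1 A2 B1 B2 y1 hB1 hB2 hy1).comp hbot
        · obtain ⟨i, j, hi, hs, hσ⟩ := con_target t0 ht0 hirr (Real.logb y1 w)
          refine aux_mem A1 A2 B1 B2 y1 t0 x ht0 i j hi hs ?_
          have hx2 : x = (A1 * y1 ^ (Real.logb y1 w) + A2) /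
              (B1 * y1 ^ (Real.logb y1 w) + B2) := by
            rw [hxw, Real.rpow_logb hy0 (ne_of_gt hy1) hw]
          rw [hx2]
          exact ((aux_Fcont A1 A2 B1 B2 y1 hB1 hB2 hy1).continuousAt).tendsto.comp hσ
      · rw [h]
        obtain ⟨i, j, hi, hs, htop⟩ := con_top t0 ht0
        exact aux_mem A1 A2 B1 B2 y1 t0 (A1 / B1) ht0 i j hi hs
          ((aux_Ftop A1 A2 B1 B2 y1 hB1 hB2 hy1).comp htop)
end
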